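/- (Concl, the Muddy Children Theorem) In the full muddy children axiomatization with m+1 muddy children, for every agent i in the group G: ⊢ [¤] TRUE → [*]^m (μ_i → K_i μ_i), i.e., after Father's initial announcement and m repetitions of his injunction, every muddy child knows it is muddy. -/

import Mathlib

/-- Formulas of dynamic epistemic logic with common knowledge. -/
inductive Form (Atom Agent Event : Type) : Type
  | atom : Atom → Form Atom Agent Event
  | tru  : Form Atom Agent Event
  | imp  : Form Atom Agent Event → Form Atom Agent Event → Form Atom Agent Event
  | and  : Form Atom Agent Event → Form Atom Agent Event → Form Atom Agent Event
  | or   : Form Atom Agent Event → Form Atom Agent Event → Form Atom Agent Event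
  | not  : Form Atom Agent Event → Form Atom Agent Event
  | K    : Agent → Form Atom Agent Event → Form Atom Agent Event
  | C    : List Agent → Form Atom Agent Event → Form Atom Agent Event
  | E    : List Agent → Form Atom Agent Event → Form Atom Agent Event
  | box  : Event → Form Atom Agent Event → Form Atom Agent Event

namespace Form

variable {Atom Agent Event : Type}

def iff (p q : Form Atom Agent Event) : Form Atom Agent Event :=
  Form.and (Form.imp p q) (Form.imp q p)

/-- The conjunction ⋀_{i ∈ G} K_i p. -/
def conjK (G : List Agent) (p : Form Atom Agent Event) : Form Atom Agent Event :=
  match G with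
  | [] => Form.tru
  | i :: G' => Form.and (Form.K i p) (conjK G' p)

/-- Classical boolean evaluation, treating atoms and modal subformulas as opaque
(evaluated by the valuation `v`).  A formula is a classical tautology iff it
evaluates to `true` under every such valuation. -/
def evalC (v : Form Atom Agent Event → Bool) : Form Atom Agent Event → Bool
  | Form.tru => true
  | Form.imp p q => !(evalC v p) || evalC v q
  | Form.and p q => evalC v p && evalC v q
  | Form.or p q => evalC v p || evalC v q
  | Form.not p => !(evalC v p)
  | p => v p

/-- Hilbert-style derivability for the system 𝒯^{C[α]}_G, with an extra set `Ax`
of proper axioms. -/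
inductive Prf (Ax : Form Atom Agent Event → Prop) : Form Atom Agent Event → Prop
  | ax {p} : Ax p → Prf Ax p
  | taut {p} : (∀ v, evalC v p = true) → Prf Ax p
  | mp {p q} : Prf Ax p → Prf Ax (Form.imp p q) → Prf Ax q
  | kK (i : Agent) (p q : Form Atom Agent Event) :
      Prf Ax (Form.imp (Form.K i p) (Form.imp (Form.K i (Form.imp p q)) (Form.K i q)))
  | tK (i : Agent) (p : Form Atom Agent Event) : Prf Ax (Form.imp (Form.K i p) p)
  | genK (i : Agent) {p} : Prf Ax p → Prf Ax (Form.K i p)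
  | kBox (a : Event) (p q : Form Atom Agent Event) :
      Prf Ax (Form.imp (Form.box a p) (Form.imp (Form.box a (Form.imp p q)) (Form.box a q)))
  | tBox (a : Event) (p : Form Atom Agent Event) : Prf Ax (Form.imp (Form.box a p) p)
  | genBox (a : Event) {p} : Prf Ax p → Prf Ax (Form.box a p)
  | defE (G : List Agent) (p : Form Atom Agent Event) :
      Prf Ax (Form.iff (Form.E G p) (Form.conjK G p))
  | fixC (G : List Agent) (p : Form Atom Agent Event) :
      Prf Ax (Form.imp (Form.C G p) (Form.and p (Form.E G (Form.C G p))))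
  | gfpC {G : List Agent} {p r : Form Atom Agent Event} :
      Prf Ax (Form.imp r (Form.and p (Form.E G r))) → Prf Ax (Form.imp r (Form.C G p))
  | kt1 (i : Agent) (a : Event) (p : Form Atom Agent Event) :
      Prf Ax (Form.imp (Form.K i (Form.box a p)) (Form.box a (Form.K i p)))

/-- n-fold iterated shared knowledge E_G^n. -/
def iterE (G : List Agent) : ℕ → Form Atom Agent Event → Form Atom Agent Event
  | 0, p => p
  | n+1, p => Form.E G (iterE G n p)

/-- k-fold iterated dynamic modality [α]^k. -/
def iterBox (a : Event) : ℕ → Form Atom Agent Event → Form Atom Agent Event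
  | 0, p => p
  | n+1, p => Form.box a (iterBox a n p)

end Form

/-- The empty set of proper axioms. -/
def NoAx {Atom Agent Event : Type} : Form Atom Agent Event → Prop := fun _ => False

/-- Atomic propositions of the muddy children puzzle. -/
inductive MCAtom : Type
  | lam : ℕ → MCAtom   -- at least j children are muddy
  | eps : ℕ → MCAtom   -- exactly j children are muddy
  | mu  : ℕ → MCAtom   -- child i is muddy

abbrev MForm (Event : Type) := Form MCAtom ℕ Event

def lam {Event : Type} (j : ℕ) : MForm Event := Form.atom (MCAtom.lam j)
def eps {Event : Type} (j : ℕ) : MForm Event := Form.atom (MCAtom.eps j)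
def mud {Event : Type} (i : ℕ) : MForm Event := Form.atom (MCAtom.mu i)

namespace Form
variable {Atom Agent Event : Type} {Ax : Form Atom Agent Event → Prop}

lemma pid (p : Form Atom Agent Event) : Prf Ax (p.imp p) :=
  Prf.taut (fun v => by simp only [evalC]; cases evalC v p <;> rfl)

lemma imp_trans {p q r : Form Atom Agent Event} (h1 : Prf Ax (p.imp q))
    (h2 : Prf Ax (q.imp r)) : Prf Ax (p.imp r) :=
  Prf.mp h2 (Prf.mp h1 (Prf.taut (fun v => by
    simp only [evalC]; cases evalC v p <;> cases evalC v q <;> cases evalC v r <;> rfl)))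

lemma imp_const {p q : Form Atom Agent Event} (h : Prf Ax q) : Prf Ax (p.imp q) :=
  Prf.mp h (Prf.taut (fun v => by
    simp only [evalC]; cases evalC v p <;> cases evalC v q <;> rfl))

lemma mp_in {r p q : Form Atom Agent Event} (h1 : Prf Ax (r.imp (p.imp q)))
    (h2 : Prf Ax (r.imp p)) : Prf Ax (r.imp q) :=
  Prf.mp h2 (Prf.mp h1 (Prf.taut (fun v => by
    simp only [evalC]; cases evalC v p <;> cases evalC v q <;> cases evalC v r <;> rfl)))

lemma mp2_under {r a b c : Form Atom Agent Event} (h1 : Prf Ax (r.imp a))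
    (h2 : Prf Ax (r.imp b)) (h3 : Prf Ax (a.imp (b.imp c))) : Prf Ax (r.imp c) :=
  mp_in (imp_trans h1 h3) h2

lemma swap_arg {p q r : Form Atom Agent Event} (h1 : Prf Ax (p.imp (q.imp r)))
    (h2 : Prf Ax q) : Prf Ax (p.imp r) :=
  mp_in h1 (imp_const h2)

lemma and_left (p q : Form Atom Agent Event) : Prf Ax ((p.and q).imp p) :=
  Prf.taut (fun v => by
    simp only [evalC]; cases evalC v p <;> cases evalC v q <;> rfl)

lemma and_right (p q : Form Atom Agent Event) : Prf Ax ((p.and q).imp q) :=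
  Prf.taut (fun v => by
    simp only [evalC]; cases evalC v p <;> cases evalC v q <;> rfl)

lemma and_mono {p q r s : Form Atom Agent Event} (h1 : Prf Ax (p.imp q))
    (h2 : Prf Ax (r.imp s)) : Prf Ax ((p.and r).imp (q.and s)) :=
  Prf.mp h2 (Prf.mp h1 (Prf.taut (fun v => by
    simp only [evalC]
    cases evalC v p <;> cases evalC v q <;> cases evalC v r <;> cases evalC v s <;> rfl)))

lemma and_collect {a b c d e f : Form Atom Agent Event}
    (h1 : Prf Ax (a.imp (c.imp e))) (h2 : Prf Ax (b.imp (d.imp f))) :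
    Prf Ax ((a.and b).imp ((c.and d).imp (e.and f))) :=
  Prf.mp h2 (Prf.mp h1 (Prf.taut (fun v => by
    simp only [evalC]
    cases evalC v a <;> cases evalC v b <;> cases evalC v c <;> cases evalC v d <;>
      cases evalC v e <;> cases evalC v f <;> rfl)))

lemma iff_mp {p q : Form Atom Agent Event} (h : Prf Ax (Form.iff p q)) :
    Prf Ax (p.imp q) :=
  Prf.mp h (Prf.taut (fun v => by
    simp only [Form.iff, evalC]; cases evalC v p <;> cases evalC v q <;> rfl))

lemma iff_mpr {p q : Form Atom Agent Event} (h : Prf Ax (Form.iff p q)) :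
    Prf Ax (q.imp p) :=
  Prf.mp h (Prf.taut (fun v => by
    simp only [Form.iff, evalC]; cases evalC v p <;> cases evalC v q <;> rfl))

lemma compose2 {a b c d : Form Atom Agent Event} (h1 : Prf Ax (a.imp b))
    (h2 : Prf Ax (c.imp (b.imp d))) : Prf Ax (a.imp (c.imp d)) :=
  Prf.mp h2 (Prf.mp h1 (Prf.taut (fun v => by
    simp only [evalC]
    cases evalC v a <;> cases evalC v b <;> cases evalC v c <;> cases evalC v d <;> rfl)))

lemma imp_uncurry {x y z : Form Atom Agent Event} (h : Prf Ax (x.imp (y.imp z))) :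
    Prf Ax ((x.and y).imp z) :=
  Prf.mp h (Prf.taut (fun v => by
    simp only [evalC]
    cases evalC v x <;> cases evalC v y <;> cases evalC v z <;> rfl))

lemma and_intro_taut (x y : Form Atom Agent Event) : Prf Ax (x.imp (y.imp (x.and y))) :=
  Prf.taut (fun v => by
    simp only [evalC]; cases evalC v x <;> cases evalC v y <;> rfl)

/-- K is monotone. -/
lemma K_mono {p q : Form Atom Agent Event} (i : Agent) (h : Prf Ax (p.imp q)) :
    Prf Ax ((Form.K i p).imp (Form.K i q)) :=
  swap_arg (Prf.kK i p q) (Prf.genK i h)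

lemma K_collect {p q r : Form Atom Agent Event} (i : Agent)
    (h : Prf Ax (p.imp (q.imp r))) :
    Prf Ax ((Form.K i p).imp ((Form.K i q).imp (Form.K i r))) :=
  compose2 (K_mono i h) (Prf.kK i q r)

lemma box_mono {p q : Form Atom Agent Event} (a : Event) (h : Prf Ax (p.imp q)) :
    Prf Ax ((Form.box a p).imp (Form.box a q)) :=
  swap_arg (Prf.kBox a p q) (Prf.genBox a h)

lemma box_collect {p q r : Form Atom Agent Event} (a : Event)
    (h : Prf Ax (p.imp (q.imp r))) :
    Prf Ax ((Form.box a p).imp ((Form.box a q).imp (Form.box a r))) :=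
  compose2 (box_mono a h) (Prf.kBox a q r)

lemma box_and {p q : Form Atom Agent Event} (a : Event) :
    Prf Ax (((Form.box a p).and (Form.box a q)).imp (Form.box a (p.and q))) :=
  imp_uncurry (box_collect a (and_intro_taut p q))

lemma tru_prf : Prf Ax (Form.tru : Form Atom Agent Event) :=
  Prf.taut (fun v => by simp only [evalC])

/-- conjK lemmas -/
lemma conjK_mono {p q : Form Atom Agent Event} (h : Prf Ax (p.imp q)) :
    ∀ G : List Agent, Prf Ax ((conjK G p).imp (conjK G q))
  | [] => pid _
  | i :: G' => and_mono (K_mono i h) (conjK_mono h G')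

lemma conjK_collect {p q r : Form Atom Agent Event} (h : Prf Ax (p.imp (q.imp r))) :
    ∀ G : List Agent, Prf Ax ((conjK G p).imp ((conjK G q).imp (conjK G r)))
  | [] => imp_const (imp_const tru_prf)
  | i :: G' => and_collect (K_collect i h) (conjK_collect h G')

lemma conjK_box {p : Form Atom Agent Event} (a : Event) :
    ∀ G : List Agent, Prf Ax ((conjK G (Form.box a p)).imp (Form.box a (conjK G p)))
  | [] => imp_const (Prf.genBox a tru_prf)
  | i :: G' =>
      imp_trans (and_mono (Prf.kt1 i a p) (conjK_box a G')) (box_and a)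

lemma conjK_proj {p : Form Atom Agent Event} {i : Agent} :
    ∀ {G : List Agent}, i ∈ G → Prf Ax ((conjK G p).imp (Form.K i p))
  | j :: G', hi => by
      rcases List.mem_cons.mp hi with h | h
      · subst h; exact and_left _ _
      · exact imp_trans (and_right _ _) (conjK_proj h)

/-- E lemmas -/
lemma E_to_conj (G : List Agent) (p : Form Atom Agent Event) :
    Prf Ax ((Form.E G p).imp (conjK G p)) := iff_mp (Prf.defE G p)

lemma conj_to_E (G : List Agent) (p : Form Atom Agent Event) :
    Prf Ax ((conjK G p).imp (Form.E G p)) := iff_mpr (Prf.defE G p)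

lemma E_mono {p q : Form Atom Agent Event} {G : List Agent} (h : Prf Ax (p.imp q)) :
    Prf Ax ((Form.E G p).imp (Form.E G q)) :=
  imp_trans (E_to_conj G p) (imp_trans (conjK_mono h G) (conj_to_E G q))

lemma comp2 {x y z w u : Form Atom Agent Event} (h1 : Prf Ax (x.imp (y.imp z)))
    (h2 : Prf Ax (w.imp y)) (h3 : Prf Ax (z.imp u)) : Prf Ax (x.imp (w.imp u)) :=
  Prf.mp h3 (Prf.mp h2 (Prf.mp h1 (Prf.taut (fun v => by
    simp only [evalC]
    cases evalC v x <;> cases evalC v y <;> cases evalC v z <;> cases evalC v w <;>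
      cases evalC v u <;> rfl))))

lemma E_collect {p q r : Form Atom Agent Event} {G : List Agent}
    (h : Prf Ax (p.imp (q.imp r))) :
    Prf Ax ((Form.E G p).imp ((Form.E G q).imp (Form.E G r))) := by
  have h1 : Prf Ax ((Form.E G p).imp ((conjK G q).imp (conjK G r))) :=
    imp_trans (E_to_conj G p) (conjK_collect h G)
  exact comp2 h1 (E_to_conj G q) (conj_to_E G r)

lemma E_box {p : Form Atom Agent Event} {G : List Agent} (a : Event) :
    Prf Ax ((Form.E G (Form.box a p)).imp (Form.box a (Form.E G p))) :=
  imp_trans (E_to_conj G _) (imp_trans (conjK_box a G) (box_mono a (conj_to_E G p)))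

lemma E_elim {p : Form Atom Agent Event} {G : List Agent} (hG : G ≠ []) :
    Prf Ax ((Form.E G p).imp p) := by
  match G, hG with
  | i :: G', _ =>
    exact imp_trans (E_to_conj (i :: G') p)
      (imp_trans (conjK_proj ((List.mem_cons_self (a := i) (l := G')))) (Prf.tK i p))

lemma E_proj {p : Form Atom Agent Event} {i : Agent} {G : List Agent} (hi : i ∈ G) :
    Prf Ax ((Form.E G p).imp (Form.K i p)) :=
  imp_trans (E_to_conj G p) (conjK_proj hi)

/-- iterE lemmas -/
lemma iterE_mono {p q : Form Atom Agent Event} {G : List Agent} (h : Prf Ax (p.imp q)) :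
    ∀ n : ℕ, Prf Ax ((iterE G n p).imp (iterE G n q))
  | 0 => h
  | n + 1 => E_mono (iterE_mono h n)

lemma iterE_collect {p q r : Form Atom Agent Event} {G : List Agent}
    (h : Prf Ax (p.imp (q.imp r))) :
    ∀ n : ℕ, Prf Ax ((iterE G n p).imp ((iterE G n q).imp (iterE G n r)))
  | 0 => h
  | n + 1 => E_collect (iterE_collect h n)

lemma iterE_box {p : Form Atom Agent Event} {G : List Agent} (a : Event) :
    ∀ n : ℕ, Prf Ax ((iterE G n (Form.box a p)).imp (Form.box a (iterE G n p)))
  | 0 => pid _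
  | n + 1 => imp_trans (E_mono (iterE_box a n)) (E_box a)

lemma iterE_comm (G : List Agent) (q : Form Atom Agent Event) :
    ∀ n : ℕ, iterE G n (Form.E G q) = Form.E G (iterE G n q)
  | 0 => rfl
  | n + 1 => by simp only [iterE, iterE_comm G q n]

/-- C implies iterated E -/
lemma C_iterE {p : Form Atom Agent Event} {G : List Agent} :
    ∀ n : ℕ, Prf Ax ((Form.C G p).imp (iterE G n p))
  | 0 => imp_trans (Prf.fixC G p) (and_left _ _)
  | n + 1 =>
      imp_trans (imp_trans (Prf.fixC G p) (and_right _ _)) (E_mono (C_iterE n))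

/-- iterBox lemmas -/
lemma iterBox_collect {p q r : Form Atom Agent Event} (a : Event)
    (h : Prf Ax (p.imp (q.imp r))) :
    ∀ k : ℕ, Prf Ax ((iterBox a k p).imp ((iterBox a k q).imp (iterBox a k r)))
  | 0 => h
  | k + 1 => box_collect a (iterBox_collect a h k)

lemma persist_iter {p : Form Atom Agent Event} {a : Event}
    (h : Prf Ax (p.imp (Form.box a p))) :
    ∀ k : ℕ, Prf Ax (p.imp (iterBox a k p))
  | 0 => pid p
  | k + 1 => imp_trans h (box_mono a (persist_iter h k))


lemma taut_T1 {a b c : Form Atom Agent Event}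
    (h : Prf Ax ((a.and (Form.not c)).imp b)) :
    Prf Ax ((Form.not b).imp (a.imp c)) :=
  Prf.mp h (Prf.taut (fun v => by
    simp only [evalC]
    cases evalC v a <;> cases evalC v b <;> cases evalC v c <;> rfl))

lemma taut_T2 {e l c f : Form Atom Agent Event}
    (h : Prf Ax (e.imp (l.and (Form.not c)))) :
    Prf Ax (c.imp ((e.or f).imp f)) :=
  Prf.mp h (Prf.taut (fun v => by
    simp only [evalC]
    cases evalC v e <;> cases evalC v l <;> cases evalC v c <;> cases evalC v f <;> rfl))

lemma taut_big {a b d f c g : Form Atom Agent Event}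
    (h1 : Prf Ax (a.imp b)) (h2 : Prf Ax (b.imp (d.imp f)))
    (h3 : Prf Ax (c.imp (f.imp g))) :
    Prf Ax (a.imp ((c.imp d).imp (c.imp g))) :=
  Prf.mp h3 (Prf.mp h2 (Prf.mp h1 (Prf.taut (fun v => by
    simp only [evalC]
    cases evalC v a <;> cases evalC v b <;> cases evalC v d <;> cases evalC v f <;>
      cases evalC v c <;> cases evalC v g <;> rfl))))

end Form
/-- (Concl, the Muddy Children Theorem) With m+1 muddy children, for every child
i in G: ⊢ [¤] TRUE → [*]^m (μ_i → K_i μ_i). -/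
theorem concl {Event : Type} (Ax : MForm Event → Prop)
    (G : List ℕ) (hG : G ≠ []) (pt st : Event) (m : ℕ)
    (hEQ : ∀ j : ℕ, Form.Prf Ax (Form.iff (eps j) (Form.and (lam j) (Form.not (lam (j+1))))))
    (hMono : ∀ j : ℕ, Form.Prf Ax (Form.imp (lam (j+1)) (lam j)))
    (hMC11 : Form.Prf Ax (Form.imp (Form.box pt Form.tru) (Form.C G (lam 1))))
    (hMC12 : ∀ i ∈ G, Form.Prf Ax (Form.imp (Form.box pt Form.tru)
      (Form.imp (mud i) (Form.K i (Form.or (eps m) (eps (m+1)))))))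
    (hPersMC12 : ∀ i ∈ G, ∀ a : Event,
      Form.Prf Ax (Form.imp
        (Form.imp (mud i) (Form.K i (Form.or (eps m) (eps (m+1)))))
        (Form.box a (Form.imp (mud i) (Form.K i (Form.or (eps m) (eps (m+1))))))))
    (hPers : ∀ j : ℕ, Form.Prf Ax (Form.imp (lam j) (Form.box st (lam j))))
    (hMC2 : ∀ j : ℕ, 1 ≤ j →
      Form.Prf Ax (Form.imp (Form.E G (Form.E G (lam j)))
        (Form.box st (Form.E G (Form.not (eps j))))))
    (hMC3 : ∀ i ∈ G, Form.Prf Ax (Form.imp (mud i)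
      (Form.imp (Form.K i (eps (m+1))) (Form.K i (mud i))))) :
    ∀ i ∈ G, Form.Prf Ax (Form.imp (Form.box pt Form.tru)
      (Form.iterBox st m (Form.imp (mud i) (Form.K i (mud i))))) := by
  intro i hi
  -- derived puzzle facts
  have h12 : ∀ j : ℕ, Form.Prf Ax ((Form.not (eps j)).imp ((lam j).imp
      (lam (j+1) : MForm Event))) := fun j => Form.taut_T1 (Form.iff_mpr (hEQ j))
  -- the one-step lemma L
  have L : ∀ n j : ℕ, 1 ≤ j →
      Form.Prf Ax ((Form.iterE G (n+2) (lam j)).imp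
        (Form.box st (Form.iterE G (n+1) (lam (j+1) : MForm Event)))) := by
    intro n j hj
    have x1 := Form.iterE_mono (G := G) (hMC2 j hj) n
    have x3 := Form.imp_trans x1 (Form.iterE_box st n)
    simp only [Form.iterE_comm] at x3
    have a : Form.Prf Ax ((Form.iterE G (n+2) (lam j)).imp
        (Form.box st (Form.iterE G (n+1) (Form.not (eps j) : MForm Event)))) := x3
    have b : Form.Prf Ax ((Form.iterE G (n+2) (lam j)).imp
        (Form.iterE G (n+1) (lam j : MForm Event))) := Form.E_elim hG
    have bpers : Form.Prf Ax ((Form.iterE G (n+2) (lam j)).imp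
        (Form.box st (Form.iterE G (n+1) (lam j : MForm Event)))) :=
      Form.imp_trans b (Form.imp_trans (Form.iterE_mono (hPers j) (n+1))
        (Form.iterE_box st (n+1)))
    have c := Form.iterE_collect (G := G) (h12 j) (n+1)
    exact Form.mp2_under a bpers (Form.box_collect st c)
  -- main induction
  have main : ∀ k n j : ℕ, 1 ≤ j →
      Form.Prf Ax ((Form.iterE G (n+k+1) (lam j)).imp
        (Form.iterBox st k (Form.iterE G (n+1) (lam (j+k) : MForm Event)))) := by
    intro k
    induction k with
    | zero => intro n j hj; exact Form.pid _
    | succ k ih =>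
      intro n j hj
      have l := L (n+k) j hj
      have ih' := ih n (j+1) (by omega)
      have e : j+1+k = j+k+1 := by omega
      rw [e] at ih'
      exact Form.imp_trans l (Form.box_mono st ih')
  -- assemble
  have step0 : Form.Prf Ax ((Form.box pt (Form.tru : MForm Event)).imp
      (Form.iterE G (m+1) (lam 1))) :=
    Form.imp_trans hMC11 (Form.C_iterE (m+1))
  have hmain := main m 0 1 (le_refl 1)
  rw [Nat.zero_add, Nat.add_comm 1 m] at hmain
  have hA : Form.Prf Ax ((Form.box pt (Form.tru : MForm Event)).imp
      (Form.iterBox st m (Form.E G (lam (m+1))))) := Form.imp_trans step0 hmain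
  have hB : Form.Prf Ax ((Form.box pt (Form.tru : MForm Event)).imp
      (Form.iterBox st m ((mud i).imp (Form.K i (Form.or (eps m) (eps (m+1))))))) :=
    Form.imp_trans (hMC12 i hi) (Form.persist_iter (hPersMC12 i hi st) m)
  -- the key epistemic theorem T
  have t2 : Form.Prf Ax ((lam (m+1)).imp ((Form.or (eps m) (eps (m+1))).imp
      (eps (m+1) : MForm Event))) := Form.taut_T2 (Form.iff_mp (hEQ m))
  have e1 : Form.Prf Ax ((Form.E G (lam (m+1))).imp
      (Form.K i (lam (m+1) : MForm Event))) := Form.E_proj hi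
  have e2 := Form.K_collect i t2
  have mc3 := hMC3 i hi
  have T : Form.Prf Ax ((Form.E G (lam (m+1))).imp
      (((mud i).imp (Form.K i (Form.or (eps m) (eps (m+1))))).imp
        ((mud i).imp (Form.K i (mud i : MForm Event))))) :=
    Form.taut_big e1 e2 mc3
  exact Form.mp2_under hA hB (Form.iterBox_collect st T m)
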